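/- Let ρ be a positive definite complex n×n matrix, let T(X) = Σ_{i=1}^k A_i X A_i* with m×n complex matrices A₁,…,A_k satisfying Σ_{i=1}^k A_i* A_i ≤ I, and let σ be a positive semidefinite m×m matrix such that T(ρ)+σ is positive definite. Then for every complex n×n matrix X, Tr[ T(X)* (T(ρ)+σ)^{-1} T(X) ] ≤ Tr[ X* ρ^{-1} X ]. -/

import Mathlib

open Matrix ComplexOrder

open scoped InnerProductSpace

set_option maxHeartbeats 1000000

private lemma trace_re_nonneg' {p : Type*} [Fintype p] [DecidableEq p]
    {M : Matrix p p ℂ} (h : M.PosSemidef) : 0 ≤ M.trace.re := by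
  have hd : ∀ i, (0 : ℂ) ≤ M i i := fun i => by
    simpa [dotProduct, Pi.single_apply] using h.dotProduct_mulVec_nonneg (Pi.single i 1)
  have h0 : (0 : ℂ) ≤ M.trace := Finset.sum_nonneg fun i _ => hd i
  simpa using (Complex.le_def.mp h0).1

/-- If `1 - MᴴM ⪰ 0` then `1 - MMᴴ ⪰ 0`. -/
private lemma flip_contraction {p q : Type*} [Fintype p] [Fintype q] [DecidableEq p]
    [DecidableEq q] (M : Matrix p q ℂ)
    (h : ((1 : Matrix q q ℂ) - Mᴴ * M).PosSemidef) :
    ((1 : Matrix p p ℂ) - M * Mᴴ).PosSemidef := by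
  have hM : ∀ u : q → ℂ, star (M *ᵥ u) ⬝ᵥ (M *ᵥ u) ≤ star u ⬝ᵥ u := by
    intro u
    have h0 := h.dotProduct_mulVec_nonneg u
    rw [sub_mulVec, one_mulVec, dotProduct_sub, ← mulVec_mulVec, dotProduct_mulVec,
      ← star_mulVec, sub_nonneg] at h0
    exact h0
  -- pass to Euclidean space
  set f : EuclideanSpace ℂ q →ₗ[ℂ] EuclideanSpace ℂ p := Matrix.toEuclideanLin M with hf
  set g : EuclideanSpace ℂ p →ₗ[ℂ] EuclideanSpace ℂ q := Matrix.toEuclideanLin Mᴴ with hg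
  have hfapp : ∀ u : q → ℂ, f ((WithLp.equiv 2 (q → ℂ)).symm u)
      = (WithLp.equiv 2 (p → ℂ)).symm (M *ᵥ u) := fun u => by
    rw [hf, Matrix.toEuclideanLin_apply]
    simp
  have hgapp : ∀ u : p → ℂ, g ((WithLp.equiv 2 (p → ℂ)).symm u)
      = (WithLp.equiv 2 (q → ℂ)).symm (Mᴴ *ᵥ u) := fun u => by
    rw [hg, Matrix.toEuclideanLin_apply]
    simp
  have hfnorm : ∀ x : EuclideanSpace ℂ q, ‖f x‖ ≤ ‖x‖ := by
    intro x
    have h1 := hM ((WithLp.equiv 2 (q → ℂ)) x)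
    have e1 : star ((WithLp.equiv 2 (q → ℂ)) x) ⬝ᵥ ((WithLp.equiv 2 (q → ℂ)) x)
        = ⟪x, x⟫_ℂ := by
      rw [EuclideanSpace.inner_eq_star_dotProduct]; exact dotProduct_comm _ _
    have e2 : star (M *ᵥ ((WithLp.equiv 2 (q → ℂ)) x)) ⬝ᵥ (M *ᵥ ((WithLp.equiv 2 (q → ℂ)) x))
        = ⟪f x, f x⟫_ℂ := by
      have hfx : f x = (WithLp.equiv 2 (p → ℂ)).symm (M *ᵥ ((WithLp.equiv 2 (q → ℂ)) x)) := by
        rw [← hfapp]; rfl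
      rw [hfx, EuclideanSpace.inner_eq_star_dotProduct]; exact dotProduct_comm _ _
    rw [e1, e2, inner_self_eq_norm_sq_to_K, inner_self_eq_norm_sq_to_K] at h1
    have h2 : (‖f x‖ : ℝ) ^ 2 ≤ (‖x‖ : ℝ) ^ 2 := by exact_mod_cast h1
    have := Real.sqrt_le_sqrt h2
    rwa [Real.sqrt_sq (norm_nonneg _), Real.sqrt_sq (norm_nonneg _)] at this
  have hadj : g = LinearMap.adjoint f := Matrix.toEuclideanLin_conjTranspose_eq_adjoint M
  have hgnorm : ∀ y : EuclideanSpace ℂ p, ‖g y‖ ≤ ‖y‖ := by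
    intro y
    have h1 : ‖g y‖ ^ 2 = RCLike.re ⟪g y, g y⟫_ℂ := (inner_self_eq_norm_sq (g y)).symm
    have h2 : ⟪g y, g y⟫_ℂ = ⟪y, f (g y)⟫_ℂ := by
      have h2' := LinearMap.adjoint_inner_left f (g y) y
      rw [← hadj] at h2'
      exact h2'
    have h3 : RCLike.re ⟪y, f (g y)⟫_ℂ ≤ ‖y‖ * ‖f (g y)‖ := re_inner_le_norm _ _
    have h4 : ‖f (g y)‖ ≤ ‖g y‖ := hfnorm _
    have h5 : ‖g y‖ ^ 2 ≤ ‖y‖ * ‖g y‖ := by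
      rw [h1, h2]
      calc RCLike.re ⟪y, f (g y)⟫_ℂ ≤ ‖y‖ * ‖f (g y)‖ := h3
        _ ≤ ‖y‖ * ‖g y‖ := by
            exact mul_le_mul_of_nonneg_left h4 (norm_nonneg _)
    rcases eq_or_lt_of_le (norm_nonneg (g y)) with h6 | h6
    · rw [← h6]; exact norm_nonneg _
    · nlinarith
  refine PosSemidef.of_dotProduct_mulVec_nonneg ?_ fun v => ?_
  · have : ((1 : Matrix p p ℂ) - M * Mᴴ)ᴴ = 1 - M * Mᴴ := by
      simp [conjTranspose_sub, conjTranspose_mul]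
    exact this
  · rw [sub_mulVec, one_mulVec, dotProduct_sub, sub_nonneg, ← mulVec_mulVec,
      dotProduct_mulVec]
    have e0 : star v ᵥ* M = star (Mᴴ *ᵥ v) := by
      rw [star_mulVec, conjTranspose_conjTranspose]
    rw [e0]
    -- goal : star (Mᴴ *ᵥ v) ⬝ᵥ (Mᴴ *ᵥ v) ≤ star v ⬝ᵥ v
    set y : EuclideanSpace ℂ p := (WithLp.equiv 2 (p → ℂ)).symm v with hy
    have e1 : star (Mᴴ *ᵥ v) ⬝ᵥ (Mᴴ *ᵥ v) = ⟪g y, g y⟫_ℂ := by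
      rw [hgapp, EuclideanSpace.inner_eq_star_dotProduct]; exact dotProduct_comm _ _
    have e2 : star v ⬝ᵥ v = ⟪y, y⟫_ℂ := by
      rw [EuclideanSpace.inner_eq_star_dotProduct]; exact dotProduct_comm _ _
    rw [e1, e2, inner_self_eq_norm_sq_to_K, inner_self_eq_norm_sq_to_K]
    have := hgnorm y
    have h2 : ‖g y‖ ^ 2 ≤ ‖y‖ ^ 2 := by nlinarith [norm_nonneg (g y), norm_nonneg y]
    exact_mod_cast h2

/-- Schwarz-type inequality for the CP map and its adjoint. -/
private lemma key_ineq {n m k : ℕ} {ρ : Matrix (Fin n) (Fin n) ℂ} (hρ : ρ.PosSemidef)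
    (A : Fin k → Matrix (Fin m) (Fin n) ℂ)
    (hA : ((1 : Matrix (Fin n) (Fin n) ℂ) - ∑ i, (A i)ᴴ * A i).PosSemidef)
    (Z : Matrix (Fin m) (Fin m) ℂ) :
    ((∑ i, (A i)ᴴ * Z * A i)ᴴ * ρ * (∑ i, (A i)ᴴ * Z * A i)).trace.re ≤
      (Zᴴ * (∑ i, A i * ρ * (A i)ᴴ) * Z).trace.re := by
  open MatrixOrder in
  set R := CFC.sqrt ρ with hR
  open MatrixOrder in
  have hRR : R * R = ρ := CFC.sqrt_mul_sqrt_self ρ (nonneg_iff_posSemidef.mpr hρ)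
  open MatrixOrder in
  have hRH : Rᴴ = R := (nonneg_iff_posSemidef.mp (CFC.sqrt_nonneg ρ)).isHermitian
  set W := ∑ i, (A i)ᴴ * Z * A i with hW
  set C : Fin k → Matrix (Fin n) (Fin m) ℂ := fun i => R * (A i)ᴴ * Z with hC
  set B : Matrix (Fin n) (Fin k × Fin m) ℂ := Matrix.of fun x p => C p.1 x p.2 with hB
  set A' : Matrix (Fin k × Fin m) (Fin n) ℂ := Matrix.of fun p x => A p.1 p.2 x with hA'
  have b1 : B * A' = ∑ i, C i * A i := by
    ext x y
    simp only [hB, hA', Matrix.mul_apply, Matrix.of_apply, Finset.sum_apply,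
      Matrix.sum_apply]
    rw [Fintype.sum_prod_type]
  have b1' : R * W = ∑ i, C i * A i := by
    rw [hW, Finset.mul_sum]
    refine Finset.sum_congr rfl fun i _ => ?_
    simp only [hC, Matrix.mul_assoc]
  have b2 : A'ᴴ * A' = ∑ i, (A i)ᴴ * A i := by
    ext x y
    simp only [hA', Matrix.mul_apply, Matrix.conjTranspose_apply, Matrix.of_apply,
      Finset.sum_apply, Matrix.sum_apply]
    rw [Fintype.sum_prod_type]
  have b3 : B * Bᴴ = ∑ i, C i * (C i)ᴴ := by
    ext x y
    simp only [hB, Matrix.mul_apply, Matrix.conjTranspose_apply, Matrix.of_apply,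
      Finset.sum_apply, Matrix.sum_apply]
    rw [Fintype.sum_prod_type]
  -- rewrite both traces
  have lhs1 : Wᴴ * ρ * W = (B * A')ᴴ * (B * A') := by
    rw [b1, ← b1', conjTranspose_mul, hRH, ← hRR]
    simp only [Matrix.mul_assoc]
  have rhs1 : Zᴴ * (∑ i, A i * ρ * (A i)ᴴ) * Z = ∑ i, (C i)ᴴ * C i := by
    rw [Finset.mul_sum, Finset.sum_mul]
    refine Finset.sum_congr rfl fun i _ => ?_
    simp only [hC, conjTranspose_mul, conjTranspose_conjTranspose, hRH, ← hRR,
      Matrix.mul_assoc]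
  have rhs2 : (∑ i, (C i)ᴴ * C i).trace = (B * Bᴴ).trace := by
    rw [b3, trace_sum, trace_sum]
    exact Finset.sum_congr rfl fun i _ => trace_mul_comm _ _
  have hA'c : ((1 : Matrix (Fin k × Fin m) (Fin k × Fin m) ℂ) - A' * A'ᴴ).PosSemidef :=
    flip_contraction A' (by rwa [b2])
  have hpsd : (B * ((1 : Matrix (Fin k × Fin m) (Fin k × Fin m) ℂ) - A' * A'ᴴ) * Bᴴ).PosSemidef :=
    hA'c.mul_mul_conjTranspose_same B
  have expand : B * ((1 : Matrix (Fin k × Fin m) (Fin k × Fin m) ℂ) - A' * A'ᴴ) * Bᴴ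
      = B * Bᴴ - (B * A') * (B * A')ᴴ := by
    rw [Matrix.mul_sub, Matrix.sub_mul, Matrix.mul_one, conjTranspose_mul]
    simp only [Matrix.mul_assoc]
  have tr1 : ((B * A')ᴴ * (B * A')).trace = ((B * A') * (B * A')ᴴ).trace :=
    trace_mul_comm _ _
  have n0 : 0 ≤ (B * Bᴴ - (B * A') * (B * A')ᴴ).trace.re := by
    rw [← expand]; exact trace_re_nonneg' hpsd
  rw [lhs1, rhs1, rhs2]
  have := congrArg Complex.re (trace_sub (B * Bᴴ) ((B * A') * (B * A')ᴴ))
  simp only [Complex.sub_re] at this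
  rw [this] at n0
  rw [tr1]
  linarith

/-- monotonicity of the LLD metric `Tr[X* ρ⁻¹ X]` under CPTNI maps together
with additive noise. -/
theorem stmt3 {n m k : ℕ} (ρ : Matrix (Fin n) (Fin n) ℂ) (hρ : ρ.PosDef)
    (A : Fin k → Matrix (Fin m) (Fin n) ℂ)
    (hA : ((1 : Matrix (Fin n) (Fin n) ℂ) - ∑ i, (A i)ᴴ * A i).PosSemidef)
    (σ : Matrix (Fin m) (Fin m) ℂ) (hσ : σ.PosSemidef)
    (hTρσ : ((∑ i, A i * ρ * (A i)ᴴ) + σ).PosDef)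
    (X : Matrix (Fin n) (Fin n) ℂ) :
    (((∑ i, A i * X * (A i)ᴴ)ᴴ * ((∑ i, A i * ρ * (A i)ᴴ) + σ)⁻¹ *
        (∑ i, A i * X * (A i)ᴴ)).trace).re ≤ ((Xᴴ * ρ⁻¹ * X).trace).re := by
  classical
  set Y := ∑ i, A i * X * (A i)ᴴ with hY
  set Tρ := ∑ i, A i * ρ * (A i)ᴴ with hTρ
  set S := Tρ + σ with hS
  have hSH : Sᴴ = S := hTρσ.isHermitian
  have hSdet : IsUnit S.det := (Matrix.isUnit_iff_isUnit_det S).mp hTρσ.isUnit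
  set Z := S⁻¹ * Y with hZ
  set W := ∑ i, (A i)ᴴ * Z * A i with hW
  have hSinvH : (S⁻¹)ᴴ = S⁻¹ := by rw [conjTranspose_nonsing_inv, hSH]
  have hZH : Zᴴ = Yᴴ * S⁻¹ := by rw [hZ, conjTranspose_mul, hSinvH]
  have hSZ : S * Z = Y := by rw [hZ, ← Matrix.mul_assoc, mul_nonsing_inv _ hSdet, Matrix.one_mul]
  have hρH : ρᴴ = ρ := hρ.isHermitian
  have hρdet : IsUnit ρ.det := (Matrix.isUnit_iff_isUnit_det ρ).mp hρ.isUnit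
  have hinv1 : ρ⁻¹ * ρ = 1 := nonsing_inv_mul ρ hρdet
  have hinv2 : ρ * ρ⁻¹ = 1 := mul_nonsing_inv ρ hρdet
  have hWH : Wᴴ = ∑ i, (A i)ᴴ * Zᴴ * A i := by
    rw [hW, conjTranspose_sum]
    refine Finset.sum_congr rfl fun i _ => ?_
    simp only [conjTranspose_mul, conjTranspose_conjTranspose, Matrix.mul_assoc]
  -- trace identities
  have t1 : (Yᴴ * S⁻¹ * Y).trace = (Zᴴ * Y).trace := by rw [hZH]
  have t2 : (Yᴴ * S⁻¹ * Y).trace = (Yᴴ * Z).trace := by rw [hZ, Matrix.mul_assoc]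
  have t3 : (Zᴴ * S * Z).trace = (Yᴴ * S⁻¹ * Y).trace := by
    rw [hZH, Matrix.mul_assoc, hSZ]
  have t4 : (Zᴴ * Y).trace = (Wᴴ * X).trace := by
    calc (Zᴴ * Y).trace = (∑ i, Zᴴ * (A i * X * (A i)ᴴ)).trace := by
          rw [hY, Finset.mul_sum]
      _ = ∑ i, (Zᴴ * (A i * X * (A i)ᴴ)).trace := trace_sum _ _
      _ = ∑ i, ((A i)ᴴ * Zᴴ * A i * X).trace := by
          refine Finset.sum_congr rfl fun i _ => ?_
          rw [show Zᴴ * (A i * X * (A i)ᴴ) = (Zᴴ * A i * X) * (A i)ᴴ by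
              simp only [Matrix.mul_assoc], trace_mul_comm,
            show (A i)ᴴ * (Zᴴ * A i * X) = (A i)ᴴ * Zᴴ * A i * X by
              simp only [Matrix.mul_assoc]]
      _ = ((∑ i, (A i)ᴴ * Zᴴ * A i) * X).trace := by rw [Finset.sum_mul, trace_sum]
      _ = (Wᴴ * X).trace := by rw [hWH]
  have t5 : (Yᴴ * Z).trace = (Xᴴ * W).trace := by
    have e1 : (Yᴴ * Z).trace = star ((Zᴴ * Y).trace) := by
      rw [← trace_conjTranspose, conjTranspose_mul, conjTranspose_conjTranspose]
    have e2 : (Xᴴ * W).trace = star ((Wᴴ * X).trace) := by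
      rw [← trace_conjTranspose, conjTranspose_mul, conjTranspose_conjTranspose]
    rw [e1, e2, t4]
  have t6 : (Zᴴ * S * Z).trace = (Zᴴ * Tρ * Z).trace + (Zᴴ * σ * Z).trace := by
    rw [hS, Matrix.mul_add, Matrix.add_mul, trace_add]
  -- expansion of the completed square
  have e1 : ((X - ρ * W)ᴴ * ρ⁻¹ * (X - ρ * W)).trace
      = (Xᴴ * ρ⁻¹ * X).trace - (Xᴴ * W).trace - (Wᴴ * X).trace + (Wᴴ * ρ * W).trace := by
    have m1 : (X - ρ * W)ᴴ = Xᴴ - Wᴴ * ρ := by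
      rw [conjTranspose_sub, conjTranspose_mul, hρH]
    have s1 : (Xᴴ - Wᴴ * ρ) * ρ⁻¹ = Xᴴ * ρ⁻¹ - Wᴴ := by
      rw [Matrix.sub_mul, Matrix.mul_assoc, hinv2, Matrix.mul_one]
    have s2 : Xᴴ * ρ⁻¹ * (ρ * W) = Xᴴ * W := by
      rw [Matrix.mul_assoc, ← Matrix.mul_assoc ρ⁻¹, hinv1, Matrix.one_mul]
    have m2 : (X - ρ * W)ᴴ * ρ⁻¹ * (X - ρ * W)
        = Xᴴ * ρ⁻¹ * X - Xᴴ * W - Wᴴ * X + Wᴴ * ρ * W := by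
      rw [m1, s1, Matrix.sub_mul, Matrix.mul_sub, Matrix.mul_sub, s2]
      rw [show Wᴴ * (ρ * W) = Wᴴ * ρ * W by simp only [Matrix.mul_assoc]]
      abel
    rw [m2, trace_add, trace_sub, trace_sub]
  -- nonnegativity facts
  have n1 : 0 ≤ ((X - ρ * W)ᴴ * ρ⁻¹ * (X - ρ * W)).trace.re :=
    trace_re_nonneg' (hρ.inv.posSemidef.conjTranspose_mul_mul_same (X - ρ * W))
  have n2 : 0 ≤ (Zᴴ * σ * Z).trace.re :=
    trace_re_nonneg' (hσ.conjTranspose_mul_mul_same Z)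
  have n3 := key_ineq hρ.posSemidef A hA Z
  rw [← hW, ← hTρ] at n3
  -- assemble
  have r1 := congrArg Complex.re t1
  have r2 := congrArg Complex.re t2
  have r3 := congrArg Complex.re t3
  have r4 := congrArg Complex.re t4
  have r5 := congrArg Complex.re t5
  have r6 := congrArg Complex.re t6
  have re1 := congrArg Complex.re e1
  simp only [Complex.add_re, Complex.sub_re] at r6 re1
  linarith
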